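/- Let λ, μ > 0, T > 0 and let n be a positive integer. For 0 ≤ i ≤ n-1, let u_i : [0,∞)² → ℝ be defined by u_i(x,z) = (1/√T)( 1_{C_{(i+1)T/n}}(x,z) - 1_{C_{iT/n}}(x,z) + μ ∫_{iT/n}^{(i+1)T/n} 1_{C_u}(x,z) du ). Then the family (u_i, 0 ≤ i ≤ n-1) is orthogonal in L²(ν_n): for all 0 ≤ i < j ≤ n-1, ∫∫ u_i(x,z) u_j(x,z) dν_n(x,z) = 0, where dν_n(x,z) = λ n dx ⊗ μ e^{-μ z} dz on [0,∞)². -/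

import Mathlib

open MeasureTheory

/-- The trapeze `C_t = {(x,z) : 0 ≤ x ≤ t, z ≥ t - x}` (inside `[0,∞)²`). -/
def Ctrap (t : ℝ) : Set (ℝ × ℝ) := {p | 0 ≤ p.1 ∧ p.1 ≤ t ∧ t - p.1 ≤ p.2}

/-- Indicator of `C_t`. -/
noncomputable def indC (t : ℝ) (p : ℝ × ℝ) : ℝ :=
  Set.indicator (Ctrap t) (fun _ => (1 : ℝ)) p

/-- `u_i(x,z) = (1/√T)(1_{C_{(i+1)T/n}} - 1_{C_{iT/n}} + μ ∫_{iT/n}^{(i+1)T/n} 1_{C_u} du)(x,z)`. -/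
noncomputable def uSharp (T μ : ℝ) (n i : ℕ) (p : ℝ × ℝ) : ℝ :=
  (1 / Real.sqrt T) *
    (indC (((i : ℝ) + 1) * T / n) p - indC ((i : ℝ) * T / n) p +
      μ * ∫ u in ((i : ℝ) * T / n)..(((i : ℝ) + 1) * T / n), indC u p)

lemma indC_eq (t x z : ℝ) :
    indC t (x, z) = if 0 ≤ x ∧ x ≤ t ∧ t - x ≤ z then 1 else 0 := by
  simp [indC, Ctrap, Set.indicator_apply, Set.mem_setOf_eq]

lemma indC_nonneg (t x z : ℝ) : 0 ≤ indC t (x, z) := by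
  rw [indC_eq]; split <;> norm_num

lemma indC_le_one (t x z : ℝ) : indC t (x, z) ≤ 1 := by
  rw [indC_eq]; split <;> norm_num

/-- tail of the exponential distribution -/
lemma tail_exp {mu : ℝ} (hmu : 0 < mu) (r : ℝ) :
    ∫ z in Set.Ici r, mu * Real.exp (-(mu * z)) = Real.exp (-(mu * r)) := by
  rw [MeasureTheory.integral_Ici_eq_integral_Ioi]
  have hderiv : ∀ z ∈ Set.Ioi r,
      HasDerivAt (fun z => -Real.exp (-(mu * z))) (mu * Real.exp (-(mu * z))) z := by
    intro z _
    have h : HasDerivAt (fun z => -Real.exp (-(mu * z))) (-(Real.exp (-(mu * z)) * -(mu * 1))) z :=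
      (((hasDerivAt_id z).const_mul mu).neg.exp).neg
    convert h using 1
    simp only [id_eq, mul_one]
    ring
  have hint : IntegrableOn (fun z => mu * Real.exp (-(mu * z))) (Set.Ioi r) := by
    have h := (exp_neg_integrableOn_Ioi r hmu).const_mul mu
    simp only [neg_mul] at h; exact h
  have htend : Filter.Tendsto (fun z => -Real.exp (-(mu * z))) Filter.atTop (nhds 0) := by
    rw [show (0 : ℝ) = -0 by norm_num]
    refine Filter.Tendsto.neg ?_
    refine Real.tendsto_exp_atBot.comp ?_
    have := (Filter.tendsto_id (α := ℝ)).const_mul_atTop_of_neg (neg_neg_iff_pos.2 hmu)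
    simpa [neg_mul] using this
  have hcont : ContinuousWithinAt (fun z => -Real.exp (-(mu * z))) (Set.Ici r) r :=
    (Continuous.continuousWithinAt (by continuity))
  rw [MeasureTheory.integral_Ioi_of_hasDerivAt_of_tendsto hcont hderiv hint htend]
  simp

lemma W_int {mu : ℝ} (hmu : 0 < mu) (r : ℝ) :
    IntegrableOn (fun z => mu * Real.exp (-(mu * z))) (Set.Ici r) := by
  rw [integrableOn_Ici_iff_integrableOn_Ioi]
  have h := (exp_neg_integrableOn_Ioi r hmu).const_mul mu
  simp only [neg_mul] at h; exact h

lemma Gval {mu : ℝ} (hmu : 0 < mu) {x t : ℝ} (hx : 0 ≤ x) (hxt : x ≤ t) :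
    ∫ z in Set.Ici (0 : ℝ), indC t (x, z) * (mu * Real.exp (-(mu * z)))
      = Real.exp (-(mu * (t - x))) := by
  have h1 : ∀ z, indC t (x, z) * (mu * Real.exp (-(mu * z)))
      = Set.indicator (Set.Ici (t - x)) (fun z => mu * Real.exp (-(mu * z))) z := by
    intro z
    rw [indC_eq, Set.indicator_apply]
    by_cases hz : t - x ≤ z
    · simp [hz, hx, hxt, Set.mem_Ici]
    · simp [hz, Set.mem_Ici]
  simp_rw [h1]
  rw [MeasureTheory.setIntegral_indicator measurableSet_Ici]
  have h2 : Set.Ici (0 : ℝ) ∩ Set.Ici (t - x) = Set.Ici (t - x) := by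
    rw [Set.Ici_inter_Ici, max_eq_right (show (0:ℝ) ≤ t - x by linarith)]
  rw [h2, tail_exp hmu]

lemma measurable_indC_right (t x : ℝ) : Measurable (fun z => indC t (x, z)) := by
  have h : (fun z => indC t (x, z))
      = Set.indicator {z : ℝ | 0 ≤ x ∧ x ≤ t ∧ t - x ≤ z} (fun _ => (1 : ℝ)) := by
    funext z
    rw [indC_eq, Set.indicator_apply]
    simp [Set.mem_setOf_eq]
  rw [h]
  apply measurable_const.indicator
  by_cases hc : 0 ≤ x ∧ x ≤ t
  · have : {z : ℝ | 0 ≤ x ∧ x ≤ t ∧ t - x ≤ z} = Set.Ici (t - x) := by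
      ext z; simp [Set.mem_Ici, hc.1, hc.2, and_assoc]
    rw [this]; exact measurableSet_Ici
  · have : {z : ℝ | 0 ≤ x ∧ x ≤ t ∧ t - x ≤ z} = ∅ := by
      ext z
      simp only [Set.mem_setOf_eq, Set.mem_empty_iff_false, iff_false]
      rintro ⟨h1, h2, -⟩; exact hc ⟨h1, h2⟩
    rw [this]; exact MeasurableSet.empty

lemma measurable_F (x : ℝ) : Measurable (fun p : ℝ × ℝ => indC p.2 (x, p.1)) := by
  have h : (fun p : ℝ × ℝ => indC p.2 (x, p.1))
      = Set.indicator {p : ℝ × ℝ | 0 ≤ x ∧ x ≤ p.2 ∧ p.2 - x ≤ p.1} (fun _ => (1 : ℝ)) := by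
    funext p
    rw [indC_eq, Set.indicator_apply]
    simp [Set.mem_setOf_eq]
  rw [h]
  apply measurable_const.indicator
  by_cases hc : 0 ≤ x
  · have : {p : ℝ × ℝ | 0 ≤ x ∧ x ≤ p.2 ∧ p.2 - x ≤ p.1}
        = {p : ℝ × ℝ | x ≤ p.2} ∩ {p : ℝ × ℝ | p.2 - x ≤ p.1} := by
      ext p; simp [Set.mem_setOf_eq, hc]
    rw [this]
    exact (measurableSet_le measurable_const measurable_snd).inter
      (measurableSet_le (measurable_snd.sub measurable_const) measurable_fst)
  · have : {p : ℝ × ℝ | 0 ≤ x ∧ x ≤ p.2 ∧ p.2 - x ≤ p.1} = ∅ := by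
      ext p
      simp only [Set.mem_setOf_eq, Set.mem_empty_iff_false, iff_false]
      rintro ⟨h1, -, -⟩; exact hc h1
    rw [this]; exact MeasurableSet.empty

/-- The main computation: the integral of a compensated increment against the
exponential density vanishes. -/
lemma key {mu : ℝ} (hmu : 0 < mu) {x c d : ℝ} (hx : 0 ≤ x) (hxc : x ≤ c) (hcd : c ≤ d) :
    ∫ z in Set.Ici (0 : ℝ),
      (indC d (x, z) - indC c (x, z) + mu * ∫ u in c..d, indC u (x, z))
        * (mu * Real.exp (-(mu * z))) = 0 := by
  set W : ℝ → ℝ := fun z => mu * Real.exp (-(mu * z)) with hWdef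
  have hWmeas : Measurable W := by fun_prop
  have hWnn : ∀ z, 0 ≤ W z := fun z => by positivity
  have hWint : IntegrableOn W (Set.Ici 0) := W_int hmu 0
  -- integrability of the indicator pieces
  have hind : ∀ t, IntegrableOn (fun z => indC t (x, z) * W z) (Set.Ici 0) := by
    intro t
    apply hWint.mono' (((measurable_indC_right t x).mul hWmeas).aestronglyMeasurable)
    filter_upwards with z
    rw [Real.norm_eq_abs, Pi.mul_apply, abs_mul, abs_of_nonneg (indC_nonneg t x z),
      abs_of_nonneg (hWnn z)]
    nlinarith [indC_le_one t x z, indC_nonneg t x z, hWnn z]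
  -- the product function, for Fubini
  set M : Measure (ℝ × ℝ) :=
    (volume.restrict (Set.Ici (0 : ℝ))).prod (volume.restrict (Set.Ioc c d)) with hM
  have hFmeas : Measurable (fun p : ℝ × ℝ => indC p.2 (x, p.1) * W p.1) :=
    (measurable_F x).mul (hWmeas.comp measurable_fst)
  have hFint : Integrable (fun p : ℝ × ℝ => indC p.2 (x, p.1) * W p.1) M := by
    have hb : Integrable (fun p : ℝ × ℝ => W p.1 * (1 : ℝ)) M :=
      Integrable.mul_prod hWint (integrable_const 1)
    apply hb.mono' hFmeas.aestronglyMeasurable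
    filter_upwards with p
    rw [Real.norm_eq_abs, abs_mul, abs_of_nonneg (indC_nonneg _ _ _),
      abs_of_nonneg (hWnn _), mul_one]
    nlinarith [indC_le_one p.2 x p.1, indC_nonneg p.2 x p.1, hWnn p.1]
  have hCW : ∀ z, (∫ u in Set.Ioc c d, indC u (x, z)) * W z
      = ∫ u in Set.Ioc c d, indC u (x, z) * W z := by
    intro z
    rw [← integral_mul_const]
  have hCint : IntegrableOn (fun z => (∫ u in Set.Ioc c d, indC u (x, z)) * W z)
      (Set.Ici 0) := by
    have h := hFint.integral_prod_left
    simp_rw [hCW]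
    exact h
  -- rewrite the integrand
  have expand : ∀ z,
      (indC d (x, z) - indC c (x, z) + mu * ∫ u in c..d, indC u (x, z)) * W z
        = indC d (x, z) * W z - indC c (x, z) * W z
          + mu * ((∫ u in Set.Ioc c d, indC u (x, z)) * W z) := by
    intro z
    rw [intervalIntegral.integral_of_le hcd]
    ring
  calc ∫ z in Set.Ici (0 : ℝ),
        (indC d (x, z) - indC c (x, z) + mu * ∫ u in c..d, indC u (x, z)) * W z
      = ∫ z in Set.Ici (0 : ℝ),
          (indC d (x, z) * W z - indC c (x, z) * W z
            + mu * ((∫ u in Set.Ioc c d, indC u (x, z)) * W z)) := by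
        exact integral_congr_ae (Filter.Eventually.of_forall fun z => expand z)
    _ = (∫ z in Set.Ici (0 : ℝ), indC d (x, z) * W z)
          - (∫ z in Set.Ici (0 : ℝ), indC c (x, z) * W z)
          + mu * ∫ z in Set.Ici (0 : ℝ), (∫ u in Set.Ioc c d, indC u (x, z)) * W z := by
        have h12 : IntegrableOn
            (fun z => indC d (x, z) * W z - indC c (x, z) * W z) (Set.Ici 0) :=
          (hind d).sub (hind c)
        have h3 : IntegrableOn
            (fun z => mu * ((∫ u in Set.Ioc c d, indC u (x, z)) * W z)) (Set.Ici 0) :=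
          hCint.const_mul mu
        rw [MeasureTheory.integral_add h12 h3,
          MeasureTheory.integral_sub (hind d) (hind c), MeasureTheory.integral_const_mul]
    _ = 0 := by
        have hGd : ∫ z in Set.Ici (0 : ℝ), indC d (x, z) * W z
            = Real.exp (-(mu * (d - x))) := Gval hmu hx (hxc.trans hcd)
        have hGc : ∫ z in Set.Ici (0 : ℝ), indC c (x, z) * W z
            = Real.exp (-(mu * (c - x))) := Gval hmu hx hxc
        have hswap : ∫ z in Set.Ici (0 : ℝ), (∫ u in Set.Ioc c d, indC u (x, z)) * W z
            = ∫ u in Set.Ioc c d, ∫ z in Set.Ici (0 : ℝ), indC u (x, z) * W z := by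
          simp_rw [hCW]
          exact MeasureTheory.integral_integral_swap hFint
        have hval : ∫ u in Set.Ioc c d, ∫ z in Set.Ici (0 : ℝ), indC u (x, z) * W z
            = ∫ u in Set.Ioc c d, Real.exp (-(mu * (u - x))) := by
          apply setIntegral_congr_fun measurableSet_Ioc
          intro u hu
          exact Gval hmu hx (hxc.trans hu.1.le)
        have hftc : ∫ u in Set.Ioc c d, Real.exp (-(mu * (u - x)))
            = (Real.exp (-(mu * (c - x))) - Real.exp (-(mu * (d - x)))) / mu := by
          rw [← intervalIntegral.integral_of_le hcd]
          have hd : ∀ u ∈ Set.uIcc c d,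
              HasDerivAt (fun u => -Real.exp (-(mu * (u - x))) / mu)
                (Real.exp (-(mu * (u - x)))) u := by
            intro u _
            have h : HasDerivAt (fun u => -Real.exp (-(mu * (u - x))) / mu)
                (-(Real.exp (-(mu * (u - x))) * -(mu * 1)) / mu) u :=
              ((((hasDerivAt_id u).sub_const x).const_mul mu).neg.exp).neg.div_const mu
            convert h using 1
            field_simp
          rw [intervalIntegral.integral_eq_sub_of_hasDerivAt hd
            (Continuous.intervalIntegrable (by continuity) c d)]
          ring
        rw [hswap, hval, hftc, hGd, hGc]
        field_simp
        ring
  -- end calc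

lemma uSharp_of_gt {T mu : ℝ} {n : ℕ} {i : ℕ} {x z : ℝ}
    (hab : (i : ℝ) * T / n ≤ ((i : ℝ) + 1) * T / n)
    (hx : ((i : ℝ) + 1) * T / n < x) : uSharp T mu n i (x, z) = 0 := by
  unfold uSharp
  have h1 : indC (((i : ℝ) + 1) * T / n) (x, z) = 0 := by
    rw [indC_eq, if_neg]
    rintro ⟨-, h, -⟩; linarith
  have h2 : indC ((i : ℝ) * T / n) (x, z) = 0 := by
    rw [indC_eq, if_neg]
    rintro ⟨-, h, -⟩; linarith
  have h3 : (∫ u in ((i : ℝ) * T / n)..(((i : ℝ) + 1) * T / n), indC u (x, z)) = 0 := by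
    rw [intervalIntegral.integral_congr (g := fun _ => (0 : ℝ))]
    · simp
    · intro u hu
      rw [Set.uIcc_of_le hab] at hu
      show indC u (x, z) = 0
      rw [indC_eq, if_neg]
      rintro ⟨-, h, -⟩
      have := hu.2
      linarith
  rw [h1, h2, h3]
  ring

lemma uSharp_const {T mu : ℝ} {n : ℕ} {i : ℕ} {x z z' : ℝ}
    (hab : (i : ℝ) * T / n ≤ ((i : ℝ) + 1) * T / n)
    (hz : ((i : ℝ) + 1) * T / n - x ≤ z) (hz' : ((i : ℝ) + 1) * T / n - x ≤ z') :
    uSharp T mu n i (x, z) = uSharp T mu n i (x, z') := by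
  have e : ∀ t, t ≤ ((i : ℝ) + 1) * T / n → indC t (x, z) = indC t (x, z') := by
    intro t ht
    rw [indC_eq, indC_eq]
    have hiff : (0 ≤ x ∧ x ≤ t ∧ t - x ≤ z) ↔ (0 ≤ x ∧ x ≤ t ∧ t - x ≤ z') := by
      constructor <;> rintro ⟨h1, h2, h3⟩ <;> exact ⟨h1, h2, by linarith⟩
    exact if_congr hiff rfl rfl
  unfold uSharp
  rw [e _ le_rfl, e _ hab,
    intervalIntegral.integral_congr (g := fun u => indC u (x, z')) ?_]
  intro u hu
  rw [Set.uIcc_of_le hab] at hu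
  exact e u hu.2

lemma uSharp_vanish {T mu : ℝ} {n : ℕ} {j : ℕ} {x z : ℝ}
    (hcd : (j : ℝ) * T / n ≤ ((j : ℝ) + 1) * T / n)
    (hz : z < (j : ℝ) * T / n - x) : uSharp T mu n j (x, z) = 0 := by
  unfold uSharp
  have h1 : indC (((j : ℝ) + 1) * T / n) (x, z) = 0 := by
    rw [indC_eq, if_neg]
    rintro ⟨-, -, h⟩; linarith
  have h2 : indC ((j : ℝ) * T / n) (x, z) = 0 := by
    rw [indC_eq, if_neg]
    rintro ⟨-, -, h⟩; linarith
  have h3 : (∫ u in ((j : ℝ) * T / n)..(((j : ℝ) + 1) * T / n), indC u (x, z)) = 0 := by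
    rw [intervalIntegral.integral_congr (g := fun _ => (0 : ℝ))]
    · simp
    · intro u hu
      rw [Set.uIcc_of_le hcd] at hu
      show indC u (x, z) = 0
      rw [indC_eq, if_neg]
      rintro ⟨-, -, h⟩
      have := hu.1
      linarith
  rw [h1, h2, h3]
  ring

/-- Orthogonality of the family `(u_i)` in `L²(ν_n)`, where
`dν_n(x,z) = λn dx ⊗ μ e^{-μz} dz` on `[0,∞)²`. -/
theorem stmt10 (lam mu T : ℝ) (hlam : 0 < lam) (hmu : 0 < mu) (hT : 0 < T)
    (n : ℕ) (hn : 0 < n) (i j : ℕ) (hij : i < j) (hj : j ≤ n - 1) :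
    ∫ x in Set.Ici (0:ℝ), ∫ z in Set.Ici (0:ℝ),
      uSharp T mu n i (x, z) * uSharp T mu n j (x, z)
        * (lam * n * mu * Real.exp (-mu * z)) = 0 := by
  have hn' : (0 : ℝ) < n := by exact_mod_cast hn
  have hTn : 0 ≤ T / n := le_of_lt (div_pos hT hn')
  have hab : (i : ℝ) * T / n ≤ ((i : ℝ) + 1) * T / n := by
    rw [mul_div_assoc, mul_div_assoc]
    nlinarith
  have hcd : (j : ℝ) * T / n ≤ ((j : ℝ) + 1) * T / n := by
    rw [mul_div_assoc, mul_div_assoc]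
    nlinarith
  have hij' : (i : ℝ) + 1 ≤ (j : ℝ) := by exact_mod_cast Nat.succ_le_of_lt hij
  have hbc : ((i : ℝ) + 1) * T / n ≤ (j : ℝ) * T / n := by
    rw [mul_div_assoc, mul_div_assoc]
    nlinarith
  have inner_zero : ∀ x ∈ Set.Ici (0 : ℝ),
      (∫ z in Set.Ici (0:ℝ),
        uSharp T mu n i (x, z) * uSharp T mu n j (x, z)
          * (lam * n * mu * Real.exp (-mu * z))) = 0 := by
    intro x hx
    have hx0 : (0 : ℝ) ≤ x := hx
    by_cases hxb : x ≤ ((i : ℝ) + 1) * T / n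
    · -- x below the top of the i-th trapeze
      have hxc : x ≤ (j : ℝ) * T / n := hxb.trans hbc
      set K : ℝ := uSharp T mu n i (x, max (((i : ℝ) + 1) * T / n - x) 0) with hK
      have hpt : ∀ z ∈ Set.Ici (0 : ℝ),
          uSharp T mu n i (x, z) * uSharp T mu n j (x, z)
              * (lam * n * mu * Real.exp (-mu * z))
            = K * (uSharp T mu n j (x, z) * (lam * n * mu * Real.exp (-mu * z))) := by
        intro z _
        by_cases hzb : ((i : ℝ) + 1) * T / n - x ≤ z
        · rw [hK, uSharp_const hab (le_max_left _ _) hzb]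
          ring
        · push_neg at hzb
          have hvan : uSharp T mu n j (x, z) = 0 :=
            uSharp_vanish hcd (by linarith)
          rw [hvan]
          ring
      rw [setIntegral_congr_fun measurableSet_Ici hpt, MeasureTheory.integral_const_mul]
      have main : (∫ z in Set.Ici (0:ℝ),
          uSharp T mu n j (x, z) * (lam * n * mu * Real.exp (-mu * z))) = 0 := by
        have e : ∀ z, uSharp T mu n j (x, z) * (lam * ↑n * mu * Real.exp (-mu * z))
            = (lam * n / Real.sqrt T)
                * ((indC (((j : ℝ) + 1) * T / n) (x, z) - indC ((j : ℝ) * T / n) (x, z)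
                    + mu * ∫ u in ((j : ℝ) * T / n)..(((j : ℝ) + 1) * T / n), indC u (x, z))
                  * (mu * Real.exp (-(mu * z)))) := by
          intro z
          unfold uSharp
          rw [neg_mul]
          ring
        calc (∫ z in Set.Ici (0:ℝ),
              uSharp T mu n j (x, z) * (lam * n * mu * Real.exp (-mu * z)))
            = ∫ z in Set.Ici (0:ℝ), (lam * n / Real.sqrt T)
                * ((indC (((j : ℝ) + 1) * T / n) (x, z) - indC ((j : ℝ) * T / n) (x, z)
                    + mu * ∫ u in ((j : ℝ) * T / n)..(((j : ℝ) + 1) * T / n), indC u (x, z))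
                  * (mu * Real.exp (-(mu * z)))) :=
              integral_congr_ae (Filter.Eventually.of_forall fun z => e z)
          _ = 0 := by
              rw [MeasureTheory.integral_const_mul, key hmu hx0 hxc hcd, mul_zero]
      rw [main, mul_zero]
    · -- x above the top of the i-th trapeze: u_i vanishes
      push_neg at hxb
      have hpt : ∀ z ∈ Set.Ici (0 : ℝ),
          uSharp T mu n i (x, z) * uSharp T mu n j (x, z)
              * (lam * n * mu * Real.exp (-mu * z)) = 0 := by
        intro z _
        rw [uSharp_of_gt hab hxb]
        ring
      rw [setIntegral_congr_fun measurableSet_Ici hpt, integral_zero]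
  rw [setIntegral_congr_fun measurableSet_Ici inner_zero, integral_zero]
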